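/- The ω-language H = [(0²)*·0·A·Σ·(0²)⁺·Σ]^ω over the alphabet Σ ∪ {0,A} satisfies: its topological closure is Cl(H) = H ∪ V·0^ω, where V = Pref(H) ∩ (Σ ∪ {0,A})*·0 is the set of prefixes of words of H ending in the letter 0. -/

import Mathlib

/-- Cumulative concatenation of the first `n` blocks. -/
def cumCat {C : Type*} (b : ℕ → List C) : ℕ → List C
  | 0 => []
  | n + 1 => cumCat b n ++ b n

/-- The infinite word obtained by concatenating the (nonempty) blocks `b 0, b 1, …`. -/
def infCat {C : Type*} (b : ℕ → List C) (d : C) : ℕ → C :=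
  fun i => (cumCat b (i + 1)).getD i d

/-- The length-`n` prefix of an infinite word. -/
def wordPrefix {α : Type*} (x : ℕ → α) (n : ℕ) : List α := List.ofFn fun i : Fin n => x i

/-- `Pref L` is the set of finite prefixes of elements of `L`. -/
def Pref {α : Type*} (L : Set (ℕ → α)) : Set (List α) :=
  {w | ∃ x ∈ L, ∃ n, w = wordPrefix x n}

/-- In the alphabet `Σ ∪ {0, A}` (the letter `0` being `Sum.inr 0` and `A` being
`Sum.inr 1`), a block of `H`: `0^{2k+1}·A·a·0^{2m}·b` with `k ≥ 0`, `m ≥ 1`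
(encoded as `m+1` with `m ≥ 0`), and `a, b ∈ Σ`. -/
def hSetBlock {α : Type*} (k m : ℕ) (a b : α) : List (α ⊕ Fin 2) :=
  List.replicate (2 * k + 1) (Sum.inr 0) ++ [Sum.inr 1, Sum.inl a] ++
    List.replicate (2 * (m + 1)) (Sum.inr 0) ++ [Sum.inl b]

/-- The ω-language `H = [(0²)*·0·A·Σ·(0²)⁺·Σ]^ω`: infinite concatenations of blocks
`0^{2k+1}·A·a·0^{2m}·b` with `k ≥ 0`, `m ≥ 1`, `a, b ∈ Σ`. -/
def Hset (α : Type*) : Set (ℕ → α ⊕ Fin 2) :=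
  {y | ∃ f : ℕ → ℕ × ℕ × α × α,
    y = infCat (fun n => hSetBlock (f n).1 (f n).2.1 (f n).2.2.1 (f n).2.2.2) (Sum.inr 0)}

/-- `V = Pref(H) ∩ (Σ ∪ {0,A})*·0`: the prefixes of words of `H` ending in the
letter `0`. -/
def Vset (α : Type*) : Set (List (α ⊕ Fin 2)) :=
  {w | w ∈ Pref (Hset α) ∧ w.getLast? = some (Sum.inr 0)}

/-- `V·0^ω`: words of `V` continued by infinitely many letters `0`. -/
def VZeroOmega (α : Type*) : Set (ℕ → α ⊕ Fin 2) :=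
  {z | ∃ w ∈ Vset α, z = fun i => w.getD i (Sum.inr 0)}

/-! ### Auxiliary lemmas -/

section Aux

variable {α : Type*} {C : Type*}

lemma hSetBlock_length (k m : ℕ) (a b : α) :
    (hSetBlock k m a b).length = 2*k + 2*m + 6 := by
  simp [hSetBlock]; omega

lemma hSetBlock_getD (k m : ℕ) (a b : α) (i : ℕ) :
    (hSetBlock k m a b).getD i (Sum.inr 0) =
      if i = 2*k+1 then Sum.inr 1
      else if i = 2*k+2 then Sum.inl a
      else if i = 2*k+2*m+5 then Sum.inl b
      else Sum.inr 0 := by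
  have h2 : ∀ j : ℕ, ([Sum.inr 1, Sum.inl a] : List (α ⊕ Fin 2))[j]? =
      if j = 0 then some (Sum.inr 1) else if j = 1 then some (Sum.inl a) else none := by
    intro j; match j with
    | 0 => rfl
    | 1 => rfl
    | (n+2) => rfl
  have h1 : ∀ j : ℕ, ([Sum.inl b] : List (α ⊕ Fin 2))[j]? =
      if j = 0 then some (Sum.inl b) else none := by
    intro j; match j with
    | 0 => rfl
    | (n+1) => rfl
  simp only [hSetBlock, List.getD_eq_getElem?_getD, List.getElem?_append,
    List.getElem?_replicate, h1, h2, List.length_append, List.length_replicate,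
    List.length_cons, List.length_nil]
  split_ifs <;> simp_all <;> omega

lemma zero_run_cases {k m : ℕ} {a b : α} {r : ℕ}
    (hz : (hSetBlock k m a b).getD r (Sum.inr 0) = Sum.inr 0) :
    r ≠ 2*k+1 ∧ r ≠ 2*k+2 ∧ r ≠ 2*k+2*m+5 := by
  refine ⟨fun he => ?_, fun he => ?_, fun he => ?_⟩
  · rw [hSetBlock_getD, he, if_pos rfl] at hz; simp at hz
  · rw [hSetBlock_getD, he, if_neg (by omega), if_pos rfl] at hz; simp at hz
  · rw [hSetBlock_getD, he, if_neg (by omega), if_neg (by omega), if_pos rfl] at hz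
    simp at hz

lemma le_cumCat_length (b : ℕ → List C) (hb : ∀ j, 1 ≤ (b j).length) (n : ℕ) :
    n ≤ (cumCat b n).length := by
  induction n with
  | zero => simp [cumCat]
  | succ n ih =>
    have := hb n
    simp only [cumCat, List.length_append]
    omega

lemma cumCat_prefix (b : ℕ → List C) {n n' : ℕ} (h : n ≤ n') :
    cumCat b n <+: cumCat b n' := by
  induction h with
  | refl => exact List.prefix_refl _
  | step h ih => exact ih.trans (List.prefix_append _ _)

lemma getD_of_prefix {l l' : List C} (h : l <+: l') {i : ℕ} (hi : i < l.length) (d : C) :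
    l.getD i d = l'.getD i d := by
  rw [List.getD_eq_getElem _ _ hi, List.getD_eq_getElem _ _ (hi.trans_le h.length_le)]
  exact h.getElem hi

lemma infCat_getD (b : ℕ → List C) (hb : ∀ j, 1 ≤ (b j).length) (d : C) {n i : ℕ}
    (hi : i < (cumCat b n).length) :
    infCat b d i = (cumCat b n).getD i d := by
  have hi1 : i < (cumCat b (i+1)).length :=
    lt_of_lt_of_le (Nat.lt_succ_self i) (le_cumCat_length b hb (i+1))
  show (cumCat b (i+1)).getD i d = (cumCat b n).getD i d
  rcases le_total (i+1) n with h | h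
  · exact getD_of_prefix (cumCat_prefix b h) hi1 d
  · exact (getD_of_prefix (cumCat_prefix b h) hi d).symm

lemma infCat_block (b : ℕ → List C) (hb : ∀ j, 1 ≤ (b j).length) (d : C) (j : ℕ) {r : ℕ}
    (hr : r < (b j).length) :
    infCat b d ((cumCat b j).length + r) = (b j).getD r d := by
  have hlen : (cumCat b (j+1)).length = (cumCat b j).length + (b j).length := by
    simp [cumCat]
  rw [infCat_getD b hb d (n := j+1) (by omega)]
  show (cumCat b j ++ b j).getD _ d = _
  rw [List.getD_append_right _ _ _ _ (Nat.le_add_right _ _)]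
  congr 1
  omega

lemma infCat_shift (b : ℕ → List C) (hb : ∀ j, 1 ≤ (b j).length) (d : C) (i : ℕ) :
    infCat b d ((b 0).length + i) = infCat (fun j => b (j+1)) d i := by
  have hcum : ∀ n, cumCat b (n+1) = b 0 ++ cumCat (fun j => b (j+1)) n := by
    intro n
    induction n with
    | zero => simp [cumCat]
    | succ n ih => show cumCat b (n+1) ++ b (n+1) = _; rw [ih]; simp [cumCat]
  have hb' : ∀ j, 1 ≤ ((fun j => b (j+1)) j).length := fun j => hb (j+1)
  have h1 : (b 0).length + i < (cumCat b ((b 0).length + i + 1)).length :=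
    lt_of_lt_of_le (Nat.lt_succ_self _) (le_cumCat_length b hb _)
  have h2 : i < (cumCat (fun j => b (j+1)) ((b 0).length + i)).length := by
    have := le_cumCat_length (fun j => b (j+1)) hb' ((b 0).length + i)
    have := hb 0
    omega
  show (cumCat b ((b 0).length + i + 1)).getD _ d = _
  rw [hcum, List.getD_append_right _ _ _ _ (Nat.le_add_right _ _), Nat.add_sub_cancel_left]
  rw [infCat_getD (fun j => b (j+1)) hb' d (n := (b 0).length + i) h2]

lemma cumCat_congr {b b' : ℕ → List C} {n : ℕ} (h : ∀ i < n, b i = b' i) :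
    cumCat b n = cumCat b' n := by
  induction n with
  | zero => rfl
  | succ n ih =>
    show cumCat b n ++ b n = cumCat b' n ++ b' n
    rw [ih (fun i hi => h i (by omega)), h n (by omega)]

lemma wordPrefix_length (x : ℕ → C) (n : ℕ) : (wordPrefix x n).length = n := by
  simp [wordPrefix]

lemma wordPrefix_getD (x : ℕ → C) {n i : ℕ} (h : i < n) (d : C) :
    (wordPrefix x n).getD i d = x i := by
  rw [List.getD_eq_getElem _ _ (by rw [wordPrefix_length]; exact h)]
  simp [wordPrefix, List.getElem_ofFn]

lemma wordPrefix_getLast? (x : ℕ → C) (n : ℕ) :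
    (wordPrefix x (n+1)).getLast? = some (x n) := by
  have hl : (wordPrefix x (n+1)).length = n+1 := wordPrefix_length x (n+1)
  have h' : n < (wordPrefix x (n+1)).length := by rw [hl]; omega
  rw [List.getLast?_eq_getElem?, hl, Nat.add_sub_cancel, List.getElem?_eq_getElem h']
  exact congrArg some (List.getElem_ofFn (f := fun i : Fin (n+1) => x i) h')

/-- The block function associated to a parameter sequence. -/
def blkF {α : Type*} (f : ℕ → ℕ × ℕ × α × α) : ℕ → List (α ⊕ Fin 2) :=
  fun n => hSetBlock (f n).1 (f n).2.1 (f n).2.2.1 (f n).2.2.2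

lemma blkF_length (f : ℕ → ℕ × ℕ × α × α) (j : ℕ) :
    1 ≤ (blkF f j).length := by
  rw [blkF, hSetBlock_length]; omega

lemma mem_Hset_iff (y : ℕ → α ⊕ Fin 2) :
    y ∈ Hset α ↔ ∃ f : ℕ → ℕ × ℕ × α × α, y = infCat (blkF f) (Sum.inr 0) :=
  Iff.rfl

/-- Destructor for `Hset`: first block and the remaining word. -/
lemma Hset_dest {y : ℕ → α ⊕ Fin 2} (hy : y ∈ Hset α) :
    ∃ k m a b, ∃ y' ∈ Hset α,
      (∀ i < 2*k+2*m+6, y i = (hSetBlock k m a b).getD i (Sum.inr 0)) ∧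
      (∀ i, y (2*k+2*m+6 + i) = y' i) := by
  obtain ⟨f, rfl⟩ := (mem_Hset_iff y).mp hy
  refine ⟨(f 0).1, (f 0).2.1, (f 0).2.2.1, (f 0).2.2.2,
    infCat (blkF (fun n => f (n+1))) (Sum.inr 0), ⟨fun n => f (n+1), rfl⟩, ?_, ?_⟩
  · intro i hi
    have h0 : (cumCat (blkF f) 0).length = 0 := rfl
    have := infCat_block (blkF f) (blkF_length f) (Sum.inr 0) 0
      (r := i) (by rw [blkF, hSetBlock_length]; omega)
    rw [h0, Nat.zero_add] at this
    exact this
  · intro i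
    have hL : (blkF f 0).length = 2*(f 0).1 + 2*(f 0).2.1 + 6 := by
      rw [blkF, hSetBlock_length]
    have := infCat_shift (blkF f) (blkF_length f) (Sum.inr 0) i
    rw [hL] at this
    exact this

/-- Every length-`n` prefix agrees with some element of `Hset`. -/
def PrefH {α : Type*} (x : ℕ → α ⊕ Fin 2) : Prop :=
  ∀ n, ∃ y ∈ Hset α, ∀ i < n, y i = x i

/-- `x` has nonzero letters beyond every position. -/
def InfNZ {α : Type*} (x : ℕ → α ⊕ Fin 2) : Prop :=
  ∀ s : ℕ, ∃ t, s ≤ t ∧ x t ≠ Sum.inr 0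

/-- Determinism of the first block. -/
lemma dest_agree {x y : ℕ → α ⊕ Fin 2} {t₀ t₁ k m : ℕ} {a b : α}
    (hx0 : ∀ u < t₀, x u = Sum.inr 0) (hx1 : x t₀ ≠ Sum.inr 0)
    (hx2 : ∀ u < t₁, x (t₀+2+u) = Sum.inr 0) (hx3 : x (t₀+2+t₁) ≠ Sum.inr 0)
    (hyb : ∀ i < 2*k+2*m+6, y i = (hSetBlock k m a b).getD i (Sum.inr 0))
    (hagree : ∀ i < t₀+t₁+3, y i = x i) :
    2*k+1 = t₀ ∧ 2*m+2 = t₁ := by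
  have hk : 2*k+1 = t₀ := by
    rcases lt_trichotomy (2*k+1) t₀ with h | h | h
    · exfalso
      have h1 := hyb (2*k+1) (by omega)
      rw [hSetBlock_getD, if_pos rfl] at h1
      have h2 := hagree (2*k+1) (by omega)
      rw [h1, hx0 _ h] at h2
      simp at h2
    · exact h
    · exfalso
      have h1 := hyb t₀ (by omega)
      rw [hSetBlock_getD, if_neg (by omega), if_neg (by omega), if_neg (by omega)] at h1
      have h2 := hagree t₀ (by omega)
      rw [h1] at h2
      exact hx1 h2.symm
  refine ⟨hk, ?_⟩
  rcases lt_trichotomy (2*m+2) t₁ with h | h | h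
  · exfalso
    have h1 := hyb (2*k+2*m+5) (by omega)
    rw [hSetBlock_getD, if_neg (by omega), if_neg (by omega), if_pos rfl] at h1
    have h2 := hagree (2*k+2*m+5) (by omega)
    have h3 : x (t₀+2+(2*m+2)) = Sum.inr 0 := hx2 _ h
    rw [show t₀+2+(2*m+2) = 2*k+2*m+5 from by omega] at h3
    rw [h1, h3] at h2
    simp at h2
  · exact h
  · exfalso
    have h1 := hyb (t₀+2+t₁) (by omega)
    rw [hSetBlock_getD, if_neg (by omega), if_neg (by omega), if_neg (by omega)] at h1
    have h2 := hagree (t₀+2+t₁) (by omega)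
    rw [h1] at h2
    exact hx3 h2.symm

/-- The key step: extraction of the first block of a word in the closure with
infinitely many nonzero letters. -/
lemma hStep {x : ℕ → α ⊕ Fin 2} (hP : PrefH x) (hI : InfNZ x) :
    ∃ k m a b, (∀ i < 2*k+2*m+6, x i = (hSetBlock k m a b).getD i (Sum.inr 0)) ∧
      PrefH (fun i => x (2*k+2*m+6 + i)) ∧ InfNZ (fun i => x (2*k+2*m+6 + i)) := by
  classical
  have e0 : ∃ t, x t ≠ Sum.inr 0 := by
    obtain ⟨t, _, h⟩ := hI 0; exact ⟨t, h⟩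
  set t₀ := Nat.find e0 with ht₀
  have hx1 : x t₀ ≠ Sum.inr 0 := Nat.find_spec e0
  have hx0 : ∀ u < t₀, x u = Sum.inr 0 := fun u hu => not_not.mp (Nat.find_min e0 hu)
  have e1 : ∃ t, x (t₀+2+t) ≠ Sum.inr 0 := by
    obtain ⟨t, ht, h⟩ := hI (t₀+2)
    refine ⟨t - (t₀+2), ?_⟩
    rwa [show t₀+2+(t-(t₀+2)) = t from by omega]
  set t₁ := Nat.find e1 with ht₁
  have hx3 : x (t₀+2+t₁) ≠ Sum.inr 0 := Nat.find_spec e1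
  have hx2 : ∀ u < t₁, x (t₀+2+u) = Sum.inr 0 := fun u hu => not_not.mp (Nat.find_min e1 hu)
  obtain ⟨y, hy, hagree⟩ := hP (t₀+t₁+3)
  obtain ⟨k, m, a, b, y', hy', hyb, hyshift⟩ := Hset_dest hy
  obtain ⟨hk, hm⟩ := dest_agree hx0 hx1 hx2 hx3 hyb hagree
  refine ⟨k, m, a, b, ?_, ?_, ?_⟩
  · intro i hi
    rw [← hagree i (by omega)]
    exact hyb i hi
  · intro N
    obtain ⟨y₂, hy₂, hag₂⟩ := hP (2*k+2*m+6 + N)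
    obtain ⟨k₂, m₂, a₂, b₂, y₂', hy₂', hyb₂, hshift₂⟩ := Hset_dest hy₂
    have hag₂' : ∀ i < t₀+t₁+3, y₂ i = x i := fun i hi => hag₂ i (by omega)
    obtain ⟨hk₂, hm₂⟩ := dest_agree hx0 hx1 hx2 hx3 hyb₂ hag₂'
    refine ⟨y₂', hy₂', fun i hi => ?_⟩
    rw [← hshift₂ i]
    rw [show 2*k₂+2*m₂+6 + i = 2*k+2*m+6 + i from by omega]
    exact hag₂ _ (by omega)
  · intro s
    obtain ⟨t, ht, hne⟩ := hI (2*k+2*m+6 + s)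
    refine ⟨t - (2*k+2*m+6), by omega, ?_⟩
    show x (2*k+2*m+6 + (t - (2*k+2*m+6))) ≠ Sum.inr 0
    rwa [show 2*k+2*m+6 + (t - (2*k+2*m+6)) = t from by omega]

/-- A word in the closure of `H` with infinitely many nonzero letters is in `H`. -/
lemma mem_Hset_of (x : ℕ → α ⊕ Fin 2) (hP : PrefH x) (hI : InfNZ x) : x ∈ Hset α := by
  classical
  have hstep : ∀ p : {x : ℕ → α ⊕ Fin 2 // PrefH x ∧ InfNZ x},
      ∃ q : (ℕ × ℕ × α × α) × {x : ℕ → α ⊕ Fin 2 // PrefH x ∧ InfNZ x},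
        (∀ i < 2*q.1.1+2*q.1.2.1+6,
          p.1 i = (hSetBlock q.1.1 q.1.2.1 q.1.2.2.1 q.1.2.2.2).getD i (Sum.inr 0)) ∧
        (q.2 : ℕ → α ⊕ Fin 2) = fun i => p.1 (2*q.1.1+2*q.1.2.1+6 + i) := by
    rintro ⟨x, hP, hI⟩
    obtain ⟨k, m, a, b, h1, h2, h3⟩ := hStep hP hI
    exact ⟨⟨(k, m, a, b), ⟨_, h2, h3⟩⟩, h1, rfl⟩
  choose F hF1 hF2 using hstep
  let seq : ℕ → {x : ℕ → α ⊕ Fin 2 // PrefH x ∧ InfNZ x} :=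
    fun n => Nat.rec ⟨x, hP, hI⟩ (fun _ p => (F p).2) n
  let f : ℕ → ℕ × ℕ × α × α := fun n => (F (seq n)).1
  have hBlen : ∀ n, (blkF f n).length = 2*(f n).1+2*(f n).2.1+6 := fun n => by
    rw [blkF, hSetBlock_length]
  have hseq_succ : ∀ n, seq (n+1) = (F (seq n)).2 := fun _ => rfl
  have hseq : ∀ n i, (seq n).1 i = x ((cumCat (blkF f) n).length + i) := by
    intro n
    induction n with
    | zero =>
      intro i
      have h0 : (cumCat (blkF f) 0).length = 0 := rfl
      rw [h0, Nat.zero_add]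
      rfl
    | succ n ih =>
      intro i
      have h1 : (seq (n+1)).1 i = (seq n).1 (2*(f n).1+2*(f n).2.1+6 + i) := by
        rw [hseq_succ n]
        exact congrFun (hF2 (seq n)) i
      rw [h1, ih (2*(f n).1+2*(f n).2.1+6 + i)]
      congr 1
      have hcl : (cumCat (blkF f) (n+1)).length
          = (cumCat (blkF f) n).length + (blkF f n).length := by simp [cumCat]
      rw [hcl, hBlen n]
      omega
  have hpref : ∀ n, ∀ i < (cumCat (blkF f) n).length,
      x i = (cumCat (blkF f) n).getD i (Sum.inr 0) := by
    intro n
    induction n with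
    | zero => intro i hi; simp [cumCat] at hi
    | succ n ih =>
      intro i hi
      have hlen : (cumCat (blkF f) (n+1)).length
          = (cumCat (blkF f) n).length + (blkF f n).length := by simp [cumCat]
      show x i = (cumCat (blkF f) n ++ blkF f n).getD i (Sum.inr 0)
      rcases lt_or_ge i (cumCat (blkF f) n).length with h | h
      · rw [List.getD_append _ _ _ _ h]; exact ih i h
      · rw [List.getD_append_right _ _ _ _ h]
        have h2 : i - (cumCat (blkF f) n).length < (blkF f n).length := by
          rw [hlen] at hi; omega
        have h3 := hF1 (seq n) (i - (cumCat (blkF f) n).length)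
          (by rw [hBlen n] at h2; exact h2)
        have h4 := hseq n (i - (cumCat (blkF f) n).length)
        rw [show (cumCat (blkF f) n).length + (i - (cumCat (blkF f) n).length) = i
          from by omega] at h4
        rw [← h4]
        exact h3
  refine ⟨f, ?_⟩
  funext i
  show x i = (cumCat (blkF f) (i+1)).getD i (Sum.inr 0)
  exact hpref (i+1) i
    (lt_of_lt_of_le (Nat.lt_succ_self i) (le_cumCat_length (blkF f) (blkF_length f) (i+1)))

/-- Closure characterization in a product of discrete spaces. -/
lemma mem_closure_iff_pref {β : Type*} [TopologicalSpace β] [DiscreteTopology β]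
    (S : Set (ℕ → β)) (x : ℕ → β) :
    x ∈ closure S ↔ ∀ n, ∃ y ∈ S, ∀ i < n, y i = x i := by
  constructor
  · intro hx n
    have hopen : IsOpen {y : ℕ → β | ∀ i < n, y i = x i} := by
      have hset : {y : ℕ → β | ∀ i < n, y i = x i}
          = Set.pi {i | i < n} (fun i => {x i}) := by
        ext y; simp [Set.pi]
      rw [hset]
      exact isOpen_set_pi (Set.finite_lt_nat n) (fun a _ => isOpen_discrete _)
    obtain ⟨y, hy1, hy2⟩ := mem_closure_iff.mp hx _ hopen (fun i _ => rfl)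
    exact ⟨y, hy2, hy1⟩
  · intro h
    rw [mem_closure_iff]
    intro U hU hxU
    obtain ⟨I, u, hIu, hsub⟩ := isOpen_pi_iff.mp hU x hxU
    obtain ⟨y, hyS, hagree⟩ := h (I.sup id + 1)
    refine ⟨y, hsub fun i hi => ?_, hyS⟩
    have hyi : y i = x i :=
      hagree i (Nat.lt_succ_of_le (Finset.le_sup (f := id) (Finset.mem_coe.mp hi)))
    rw [hyi]
    exact (hIu i (Finset.mem_coe.mp hi)).2

lemma find_window (S : ℕ → ℕ) (h0 : S 0 = 0) (hgrow : ∀ n, n ≤ S n) (p : ℕ) :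
    ∃ j, S j ≤ p ∧ p < S (j+1) := by
  classical
  have hex : ∃ j, p < S (j+1) := ⟨p, lt_of_lt_of_le (Nat.lt_succ_self p) (hgrow (p+1))⟩
  refine ⟨Nat.find hex, ?_, Nat.find_spec hex⟩
  rcases Nat.eq_zero_or_pos (Nat.find hex) with h | h
  · rw [h, h0]; exact Nat.zero_le p
  · have h2 := Nat.find_min hex (m := Nat.find hex - 1) (by omega)
    rw [show Nat.find hex - 1 + 1 = Nat.find hex from by omega] at h2
    exact Nat.le_of_not_lt h2

/-- Approximation of a `V·0^ω` word by words of `H`. -/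
lemma approx_V (f : ℕ → ℕ × ℕ × α × α) (n₀ : ℕ) (hn₀ : 0 < n₀)
    (hpl : infCat (blkF f) (Sum.inr 0) (n₀ - 1) = Sum.inr 0) (N : ℕ) :
    ∃ y ∈ Hset α, ∀ i < N,
      y i = if i < n₀ then infCat (blkF f) (Sum.inr 0) i else Sum.inr 0 := by
  classical
  set p := n₀ - 1 with hp
  obtain ⟨j, hj1, hj2⟩ := find_window (fun j => (cumCat (blkF f) j).length) rfl
    (le_cumCat_length (blkF f) (blkF_length f)) p
  set Lj := (cumCat (blkF f) j).length with hLj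
  have hcumlen : (cumCat (blkF f) (j+1)).length = Lj + (blkF f j).length := by
    simp [cumCat, hLj]
  have hr : p - Lj < (blkF f j).length := by omega
  set k := (f j).1 with hk
  set m := (f j).2.1 with hm
  set a := (f j).2.2.1 with ha
  set bb := (f j).2.2.2 with hbb
  have hBj : blkF f j = hSetBlock k m a bb := rfl
  have hBjlen : (blkF f j).length = 2*k+2*m+6 := by rw [hBj, hSetBlock_length]
  have hz : (hSetBlock k m a bb).getD (p - Lj) (Sum.inr 0) = Sum.inr 0 := by
    rw [← hBj]
    have h1 := infCat_block (blkF f) (blkF_length f) (Sum.inr 0) j hr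
    rw [show Lj + (p - Lj) = p from by omega] at h1
    rw [← h1]
    exact hpl
  obtain ⟨hne1, hne2, hne3⟩ := zero_run_cases hz
  have hrange : p - Lj < 2*k+2*m+6 := by rw [hBjlen] at hr; exact hr
  -- the position `p` lies either in the odd run of zeros or in the even run
  rcases lt_or_ge (p - Lj) (2*k+1) with hcase | hcase
  · -- odd run: enlarge `k`
    set K := k + N + n₀ with hK
    set f' := Function.update f j (K, m, a, bb) with hf'
    have hBj' : blkF f' j = hSetBlock K m a bb := by
      rw [blkF, hf', Function.update_self]
    have hBeq : ∀ i < j, blkF f' i = blkF f i := by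
      intro i hi
      rw [blkF, blkF, hf', Function.update_of_ne (by omega)]
    have hcum : cumCat (blkF f') j = cumCat (blkF f) j := cumCat_congr hBeq
    refine ⟨infCat (blkF f') (Sum.inr 0), ⟨f', rfl⟩, ?_⟩
    intro i hi
    rcases lt_or_ge i Lj with h | h
    · have h1 : i < (cumCat (blkF f') j).length := by rw [hcum]; omega
      rw [infCat_getD (blkF f') (blkF_length f') (Sum.inr 0) h1, hcum,
        ← infCat_getD (blkF f) (blkF_length f) (Sum.inr 0) (by omega : i < Lj)]
      rw [if_pos (by omega : i < n₀)]
    · -- i ≥ Lj : both sides are zero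
      set u := i - Lj with hu
      have hult : u < 2*K+1 := by omega
      have hlhs : infCat (blkF f') (Sum.inr 0) i = Sum.inr 0 := by
        have hulen : u < (blkF f' j).length := by rw [hBj', hSetBlock_length]; omega
        have h2 := infCat_block (blkF f') (blkF_length f') (Sum.inr 0) j hulen
        have hcl : (cumCat (blkF f') j).length = Lj := by rw [hcum]
        rw [hcl, show Lj + u = i from by omega] at h2
        rw [h2, hBj', hSetBlock_getD, if_neg (by omega), if_neg (by omega),
          if_neg (by omega)]
      rw [hlhs]
      split_ifs with h3
      · -- i < n₀ : old word is also zero there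
        have hup : u ≤ p - Lj := by omega
        have h4 := infCat_block (blkF f) (blkF_length f) (Sum.inr 0) j
          (r := u) (by omega)
        rw [show Lj + u = i from by omega] at h4
        rw [h4, hBj, hSetBlock_getD, if_neg (by omega), if_neg (by omega),
          if_neg (by omega)]
      · rfl
  · -- even run: enlarge `m`
    have hcase2 : 2*k+3 ≤ p - Lj ∧ p - Lj ≤ 2*k+2*m+4 := by omega
    set M := m + N + n₀ with hM
    set f' := Function.update f j (k, M, a, bb) with hf'
    have hBj' : blkF f' j = hSetBlock k M a bb := by
      rw [blkF, hf', Function.update_self]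
    have hBeq : ∀ i < j, blkF f' i = blkF f i := by
      intro i hi
      rw [blkF, blkF, hf', Function.update_of_ne (by omega)]
    have hcum : cumCat (blkF f') j = cumCat (blkF f) j := cumCat_congr hBeq
    refine ⟨infCat (blkF f') (Sum.inr 0), ⟨f', rfl⟩, ?_⟩
    intro i hi
    rcases lt_or_ge i Lj with h | h
    · have h1 : i < (cumCat (blkF f') j).length := by rw [hcum]; omega
      rw [infCat_getD (blkF f') (blkF_length f') (Sum.inr 0) h1, hcum,
        ← infCat_getD (blkF f) (blkF_length f) (Sum.inr 0) (by omega : i < Lj)]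
      rw [if_pos (by omega : i < n₀)]
    · set u := i - Lj with hu
      have hult : u < 2*k+2*M+6 := by omega
      have hulen : u < (blkF f' j).length := by rw [hBj', hSetBlock_length]; omega
      have h2 := infCat_block (blkF f') (blkF_length f') (Sum.inr 0) j hulen
      have hcl : (cumCat (blkF f') j).length = Lj := by rw [hcum]
      rw [hcl, show Lj + u = i from by omega] at h2
      rw [h2, hBj', hSetBlock_getD]
      have holdval : ∀ v : ℕ, v ≤ p - Lj →
          infCat (blkF f) (Sum.inr 0) (Lj + v) = (hSetBlock k m a bb).getD v (Sum.inr 0) := by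
        intro v hv
        have h4 := infCat_block (blkF f) (blkF_length f) (Sum.inr 0) j
          (r := v) (by omega)
        rw [← hBj]
        exact h4
      rcases eq_or_ne u (2*k+1) with he1 | he1
      · -- the letter A
        rw [if_pos he1]
        have hipn : i < n₀ := by omega
        rw [if_pos hipn]
        have h5 := holdval u (by omega)
        rw [show Lj + u = i from by omega] at h5
        rw [h5, hSetBlock_getD, if_pos he1]
      · rcases eq_or_ne u (2*k+2) with he2 | he2
        · -- the letter a
          rw [if_neg he1, if_pos he2]
          have hipn : i < n₀ := by omega
          rw [if_pos hipn]
          have h5 := holdval u (by omega)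
          rw [show Lj + u = i from by omega] at h5
          rw [h5, hSetBlock_getD, if_neg he1, if_pos he2]
        · -- a zero position
          rw [if_neg he1, if_neg he2, if_neg (by omega : ¬ u = 2*k+2*M+5)]
          split_ifs with h3
          · have h5 := holdval u (by omega)
            rw [show Lj + u = i from by omega] at h5
            rw [h5, hSetBlock_getD, if_neg he1, if_neg he2,
              if_neg (by omega : ¬ u = 2*k+2*m+5)]
          · rfl

end Aux

/-- The topological closure of `H` is `Cl(H) = H ∪ V·0^ω`. -/
theorem closure_Hset {α : Type*} [Fintype α]
    [TopologicalSpace α] [DiscreteTopology α] :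
    closure (Hset α) = Hset α ∪ VZeroOmega α := by
  classical
  ext x
  rw [mem_closure_iff_pref]
  constructor
  · intro hx
    by_cases hev : ∃ N, ∀ i, N ≤ i → x i = Sum.inr 0
    · right
      obtain ⟨N, hN⟩ := hev
      obtain ⟨y, hy, hagree⟩ := hx (N+1)
      have hwx : wordPrefix x (N+1) = wordPrefix y (N+1) := by
        unfold wordPrefix
        exact congrArg List.ofFn (funext fun i => (hagree i i.2).symm)
      refine ⟨wordPrefix x (N+1), ⟨⟨y, hy, N+1, hwx⟩, ?_⟩, ?_⟩
      · rw [wordPrefix_getLast?, hN N le_rfl]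
      · funext i
        rcases lt_or_ge i (N+1) with h | h
        · rw [wordPrefix_getD x h]
        · rw [List.getD_eq_default _ _ (by rw [wordPrefix_length]; exact h)]
          exact hN i (by omega)
    · left
      push_neg at hev
      exact mem_Hset_of x hx (fun s => hev s)
  · intro hx n
    rcases hx with hH | hV
    · exact ⟨x, hH, fun _ _ => rfl⟩
    · obtain ⟨w, ⟨⟨y₀, hy₀, n₀, rfl⟩, hlast⟩, rfl⟩ := hV
      obtain ⟨f, rfl⟩ := hy₀
      have hn₀ : 0 < n₀ := by
        rcases Nat.eq_zero_or_pos n₀ with h | h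
        · subst h
          simp [wordPrefix] at hlast
        · exact h
      obtain ⟨n₀', rfl⟩ : ∃ n₀', n₀ = n₀' + 1 := ⟨n₀ - 1, by omega⟩
      have hpl : infCat (blkF f) (Sum.inr 0) ((n₀'+1) - 1) = Sum.inr 0 := by
        rw [wordPrefix_getLast?] at hlast
        simpa using (Option.some.inj hlast : infCat (blkF f) (Sum.inr 0) n₀' = _)
      obtain ⟨y, hy, hagree⟩ := approx_V f (n₀'+1) (by omega) hpl n
      refine ⟨y, hy, ?_⟩
      have hgoal : ∀ i < n, y i
          = (wordPrefix (infCat (blkF f) (Sum.inr 0)) (n₀'+1)).getD i (Sum.inr 0) := by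
        intro i hi
        rw [hagree i hi]
        rcases lt_or_ge i (n₀'+1) with h | h
        · rw [if_pos h, wordPrefix_getD _ h]
        · rw [if_neg (by omega),
            List.getD_eq_default _ _ (by rw [wordPrefix_length]; omega)]
      exact fun i hi => hgoal i hi
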